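/- Let ρ = R_z(κ) R_x(ī) R_z(−κ) where R_z(κ) and R_x(ī) are the standard rotations about the z- and x-axes. If κ = arg(p, −q) (so cos κ = p/√(p²+q²), sin κ = −q/√(p²+q²)) and 𝔠 := (1 − cos ī)/(p²+q²), 𝔰 := sin ī/√(p²+q²), then ρ equals the matrix [[1 − q²𝔠, −pq𝔠, −q𝔰], [−pq𝔠, 1 − p²𝔠, −p𝔰], [q𝔰, p𝔰, 1 − (p²+q²)𝔠]]. In particular ρ is a polynomial in (p, q, 𝔠, 𝔰), hence extends real-analytically through (p,q) = (0,0) whenever 𝔠 and 𝔰 do. -/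

import Mathlib

/-- Rotation about the x-axis. -/
noncomputable def Rx (α : ℝ) : Matrix (Fin 3) (Fin 3) ℝ :=
  !![1, 0, 0;
     0, Real.cos α, -Real.sin α;
     0, Real.sin α, Real.cos α]

/-- Rotation about the z-axis. -/
noncomputable def Rz (α : ℝ) : Matrix (Fin 3) (Fin 3) ℝ :=
  !![Real.cos α, -Real.sin α, 0;
     Real.sin α, Real.cos α, 0;
     0, 0, 1]

lemma prod_aux (c s ci si : ℝ) :
    (!![c,-s,0;s,c,0;0,0,1] : Matrix (Fin 3) (Fin 3) ℝ) *
      !![1,0,0;0,ci,-si;0,si,ci] * !![c,s,0;-s,c,0;0,0,1] =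
    !![c^2+s^2*ci, c*s*(1-ci), s*si;
       s*c*(1-ci), s^2+c^2*ci, -(c*si);
       -(s*si), c*si, ci] := by
  ext i j
  fin_cases i <;> fin_cases j <;>
    simp [Matrix.mul_apply, Fin.sum_univ_succ] <;> ring

set_option maxHeartbeats 1000000 in
theorem stmt_16 (p q ibar κ : ℝ) (hpq : (p, q) ≠ (0, 0))
    (hibar : ibar ∈ Set.Ioo 0 Real.pi)
    (hcos : Real.cos κ = p / Real.sqrt (p ^ 2 + q ^ 2))
    (hsin : Real.sin κ = -q / Real.sqrt (p ^ 2 + q ^ 2)) :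
    Rz κ * Rx ibar * Rz (-κ) =
      !![1 - q ^ 2 * ((1 - Real.cos ibar) / (p ^ 2 + q ^ 2)),
           -(p * q * ((1 - Real.cos ibar) / (p ^ 2 + q ^ 2))),
           -(q * (Real.sin ibar / Real.sqrt (p ^ 2 + q ^ 2)));
         -(p * q * ((1 - Real.cos ibar) / (p ^ 2 + q ^ 2))),
           1 - p ^ 2 * ((1 - Real.cos ibar) / (p ^ 2 + q ^ 2)),
           -(p * (Real.sin ibar / Real.sqrt (p ^ 2 + q ^ 2)));
         q * (Real.sin ibar / Real.sqrt (p ^ 2 + q ^ 2)),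
           p * (Real.sin ibar / Real.sqrt (p ^ 2 + q ^ 2)),
           1 - (p ^ 2 + q ^ 2) * ((1 - Real.cos ibar) / (p ^ 2 + q ^ 2))] := by
  have hr : (0:ℝ) < p ^ 2 + q ^ 2 := by
    rcases (not_and_or.mp (by simpa [Prod.ext_iff] using hpq)) with h | h <;> positivity
  have hs : Real.sqrt (p ^ 2 + q ^ 2) > 0 := Real.sqrt_pos.mpr hr
  have hs2 : Real.sqrt (p ^ 2 + q ^ 2) ^ 2 = p ^ 2 + q ^ 2 := Real.sq_sqrt hr.le
  have hRz : Rz κ = !![Real.cos κ, -Real.sin κ, 0; Real.sin κ, Real.cos κ, 0; 0, 0, 1] := rfl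
  have hRzneg : Rz (-κ) =
      !![Real.cos κ, Real.sin κ, 0; -Real.sin κ, Real.cos κ, 0; 0, 0, 1] := by
    simp [Rz, Real.cos_neg, Real.sin_neg]
  have hRx : Rx ibar =
      !![1,0,0;0,Real.cos ibar,-Real.sin ibar;0,Real.sin ibar,Real.cos ibar] := rfl
  rw [hRz, hRx, hRzneg, prod_aux, hcos, hsin]
  set r := Real.sqrt (p ^ 2 + q ^ 2) with hrdef
  have hrne : r ≠ 0 := ne_of_gt hs
  have hne : p ^ 2 + q ^ 2 ≠ 0 := ne_of_gt hr
  have hs2' : r * r = p ^ 2 + q ^ 2 := by rw [← hs2]; ring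
  ext i j
  fin_cases i <;> fin_cases j <;>
    simp only [Matrix.cons_val', Matrix.cons_val_zero, Matrix.cons_val_one,
      Matrix.head_cons, Matrix.empty_val', Matrix.cons_val_fin_one,
      Matrix.of_apply, Fin.isValue, Fin.zero_eta, Fin.mk_one, Fin.reduceFinMk,
      Matrix.cons_val] <;>
    simp -failIfUnchanged only [div_pow, neg_div, neg_sq, hs2] <;> field_simp <;>
    first
    | ring1
    | (rw [hs2]; ring1)
    | (rw [hs2']; ring1)
    | exact Or.inl hs2.symm
    | exact Or.inl hs2'.symm
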